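/- Fix \alpha \in (0,1) and a real t with t > \alpha and t \ne 1, and for each n let m(n) = \lfloor \alpha n \rfloor. With r_1, r_2, r_3, r_{12} formed from a_n, b_n, c_n and a_{m(n)}, b_{m(n)}, c_{m(n)}, all evaluated at x = nt, one has (r_1^2 + r_2^2 - 2 r_{12}^2) / (n^{3/2} \, t \, r_3^2 \sqrt{(r_1+r_2)^2 - 4 r_{12}^2}) \to 0 as n \to \infty. -/

import Mathlib

open Filter

/-- `aa k x = ∑_{j=0}^k x^j / j!` -/
noncomputable def aa (k : ℕ) (x : ℝ) : ℝ := ∑ j ∈ Finset.range (k + 1), x ^ j / (Nat.factorial j)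

/-- `bb k x = ∑_{j=1}^k j x^j / j!` -/
noncomputable def bb (k : ℕ) (x : ℝ) : ℝ := ∑ j ∈ Finset.Icc 1 k, (j : ℝ) * x ^ j / (Nat.factorial j)

/-- `cc k x = ∑_{j=1}^k j² x^j / j!` -/
noncomputable def cc (k : ℕ) (x : ℝ) : ℝ := ∑ j ∈ Finset.Icc 1 k, (j : ℝ) ^ 2 * x ^ j / (Nat.factorial j)

noncomputable def r3 (n m : ℕ) (x : ℝ) : ℝ := aa n x + aa m x
noncomputable def r12 (n m : ℕ) (x : ℝ) : ℝ := bb n x * bb m x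
noncomputable def r1 (n m : ℕ) (x : ℝ) : ℝ := r3 n m x * cc n x - (bb n x) ^ 2
noncomputable def r2 (n m : ℕ) (x : ℝ) : ℝ := r3 n m x * cc m x - (bb m x) ^ 2

/-- The first-intensity (Kac–Rice) integrand of a Weyl random harmonic polynomial of
bidegree `(n, m)`, evaluated at `z`, with `x = |z|²`. -/
noncomputable def F (n m : ℕ) (z : ℂ) : ℝ :=
  (1 / ‖z‖ ^ 2) *
    (((r1 n m (‖z‖ ^ 2)) ^ 2 + (r2 n m (‖z‖ ^ 2)) ^ 2 - 2 * (r12 n m (‖z‖ ^ 2)) ^ 2) /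
      ((r3 n m (‖z‖ ^ 2)) ^ 2 *
        Real.sqrt ((r1 n m (‖z‖ ^ 2) + r2 n m (‖z‖ ^ 2)) ^ 2 - 4 * (r12 n m (‖z‖ ^ 2)) ^ 2)))

/-- The expected number of zeros in `ℂ`, as given by the Kac–Rice formula. -/
noncomputable def I (n m : ℕ) : ℝ := (1 / Real.pi) * ∫ z : ℂ, F n m z

/- ### Auxiliary lemmas -/

lemma Icc_subset_range' (k : ℕ) : Finset.Icc 1 k ⊆ Finset.range (k+1) := by
  intro j hj; simp only [Finset.mem_Icc] at hj; simp only [Finset.mem_range]; omega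

lemma bb_eq (k : ℕ) (x : ℝ) :
    bb k x = ∑ j ∈ Finset.range (k+1), (j : ℝ) * x ^ j / (Nat.factorial j) := by
  rw [bb]
  refine Finset.sum_subset (Icc_subset_range' k) ?_
  intro j hj hj'
  have : j = 0 := by
    simp only [Finset.mem_range] at hj; simp only [Finset.mem_Icc] at hj'; omega
  simp [this]

lemma cc_eq (k : ℕ) (x : ℝ) :
    cc k x = ∑ j ∈ Finset.range (k+1), (j : ℝ) ^ 2 * x ^ j / (Nat.factorial j) := by
  rw [cc]
  refine Finset.sum_subset (Icc_subset_range' k) ?_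
  intro j hj hj'
  have : j = 0 := by
    simp only [Finset.mem_range] at hj; simp only [Finset.mem_Icc] at hj'; omega
  simp [this]

lemma term_nonneg {x : ℝ} (hx : 0 ≤ x) (j : ℕ) : 0 ≤ x ^ j / (Nat.factorial j) := by
  positivity

lemma aa_nonneg {x : ℝ} (hx : 0 ≤ x) (k : ℕ) : 0 ≤ aa k x :=
  Finset.sum_nonneg fun j _ => term_nonneg hx j

lemma one_le_aa {x : ℝ} (hx : 0 ≤ x) (k : ℕ) : 1 ≤ aa k x := by
  have h := Finset.single_le_sum (f := fun j => x ^ j / (Nat.factorial j))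
    (fun j _ => term_nonneg hx j) (Finset.mem_range.2 (Nat.succ_pos k))
  simpa [aa] using h

lemma term_le_aa {x : ℝ} (hx : 0 ≤ x) {j k : ℕ} (hjk : j ≤ k) :
    x ^ j / (Nat.factorial j) ≤ aa k x :=
  Finset.single_le_sum (f := fun j => x ^ j / (Nat.factorial j))
    (fun i _ => term_nonneg hx i) (Finset.mem_range.2 (by omega))

lemma cc_nonneg {x : ℝ} (hx : 0 ≤ x) (k : ℕ) : 0 ≤ cc k x :=
  Finset.sum_nonneg fun j _ => by positivity

lemma cc_mono {x : ℝ} (hx : 0 ≤ x) {m n : ℕ} (h : m ≤ n) : cc m x ≤ cc n x := by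
  apply Finset.sum_le_sum_of_subset_of_nonneg
  · exact Finset.Icc_subset_Icc le_rfl h
  · intro j _ _; positivity

lemma cc_le {x : ℝ} (hx : 0 ≤ x) (k : ℕ) : cc k x ≤ (k : ℝ) ^ 2 * aa k x := by
  rw [cc_eq]
  have h1 : ∑ j ∈ Finset.range (k+1), (j : ℝ) ^ 2 * x ^ j / (Nat.factorial j)
      ≤ ∑ j ∈ Finset.range (k+1), (k : ℝ) ^ 2 * (x ^ j / (Nat.factorial j)) := by
    apply Finset.sum_le_sum
    intro j hj
    rw [mul_div_assoc]
    apply mul_le_mul_of_nonneg_right _ (term_nonneg hx j)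
    have : (j : ℝ) ≤ (k : ℝ) := by exact_mod_cast Nat.lt_succ_iff.1 (Finset.mem_range.1 hj)
    have hj0 : (0:ℝ) ≤ (j:ℝ) := Nat.cast_nonneg j
    nlinarith
  rw [← Finset.mul_sum] at h1
  exact h1

lemma cauchy {x : ℝ} (hx : 0 ≤ x) (k : ℕ) : bb k x ^ 2 ≤ aa k x * cc k x := by
  have h := Finset.sum_mul_sq_le_sq_mul_sq (Finset.range (k+1))
    (fun j => Real.sqrt (x ^ j / (Nat.factorial j)))
    (fun j => (j : ℝ) * Real.sqrt (x ^ j / (Nat.factorial j)))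
  have e1 : ∀ j : ℕ, Real.sqrt (x ^ j / (Nat.factorial j)) *
      ((j : ℝ) * Real.sqrt (x ^ j / (Nat.factorial j))) = (j : ℝ) * x ^ j / (Nat.factorial j) := by
    intro j
    rw [mul_comm, mul_assoc, Real.mul_self_sqrt (term_nonneg hx j), mul_div_assoc]
  have e2 : ∀ j : ℕ, Real.sqrt (x ^ j / (Nat.factorial j)) ^ 2 = x ^ j / (Nat.factorial j) :=
    fun j => Real.sq_sqrt (term_nonneg hx j)
  have e3 : ∀ j : ℕ, ((j : ℝ) * Real.sqrt (x ^ j / (Nat.factorial j))) ^ 2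
      = (j : ℝ) ^ 2 * x ^ j / (Nat.factorial j) := by
    intro j
    rw [mul_pow, e2, mul_div_assoc]
  simp only [e1, e2, e3] at h
  rw [bb_eq, cc_eq, aa]
  exact h

lemma fact_le (a d : ℕ) : Nat.factorial (a + d) ≤ Nat.factorial a * (a + d) ^ d := by
  induction d with
  | zero => simp
  | succ d ih =>
      have h1 : Nat.factorial (a + (d+1)) = (a + d + 1) * Nat.factorial (a + d) := by
        rw [← Nat.add_assoc]; exact Nat.factorial_succ _
      rw [h1]
      calc (a + d + 1) * Nat.factorial (a + d) ≤ (a + d + 1) * (Nat.factorial a * (a + d) ^ d) :=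
            Nat.mul_le_mul_left _ ih
        _ ≤ (a + d + 1) * (Nat.factorial a * (a + d + 1) ^ d) := by
            apply Nat.mul_le_mul_left
            apply Nat.mul_le_mul_left
            exact Nat.pow_le_pow_left (by omega) d
        _ = Nat.factorial a * (a + (d+1)) ^ (d+1) := by ring_nf

lemma fact_le' {j k : ℕ} (h : j ≤ k) : (Nat.factorial k : ℝ) ≤ Nat.factorial j * (k:ℝ) ^ (k - j) := by
  obtain ⟨d, rfl⟩ := Nat.exists_eq_add_of_le h
  have := fact_le j d
  have h2 : j + d - j = d := by omega
  rw [h2]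
  exact_mod_cast this

lemma term_le_term {x : ℝ} (hx : 0 ≤ x) {j k : ℕ} (hjk : j ≤ k) (hk : (k : ℝ) ≤ x) :
    x ^ j / (Nat.factorial j) ≤ x ^ k / (Nat.factorial k) := by
  have hj0 : (0:ℝ) < Nat.factorial j := by exact_mod_cast Nat.factorial_pos j
  have hk0 : (0:ℝ) < Nat.factorial k := by exact_mod_cast Nat.factorial_pos k
  rw [div_le_div_iff₀ hj0 hk0]
  have h1 : (Nat.factorial k : ℝ) ≤ Nat.factorial j * (k:ℝ) ^ (k - j) := fact_le' hjk
  have h2 : (k:ℝ) ^ (k - j) ≤ x ^ (k - j) := by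
    apply pow_le_pow_left₀ (Nat.cast_nonneg k) hk
  calc x ^ j * (Nat.factorial k : ℝ) ≤ x ^ j * (Nat.factorial j * x ^ (k - j)) := by
        apply mul_le_mul_of_nonneg_left _ (pow_nonneg hx j)
        calc (Nat.factorial k : ℝ) ≤ Nat.factorial j * (k:ℝ) ^ (k - j) := h1
          _ ≤ Nat.factorial j * x ^ (k - j) := by
              apply mul_le_mul_of_nonneg_left h2 (le_of_lt (by exact_mod_cast Nat.factorial_pos j))
    _ = x ^ k * Nat.factorial j := by
        rw [← mul_assoc, mul_comm (x ^ j) (Nat.factorial j : ℝ), mul_assoc,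
          ← pow_add]
        rw [Nat.add_sub_cancel' hjk, mul_comm]

lemma geom_term {x : ℝ} (hx : 0 < x) {k n : ℕ} (hk : k ≤ n) :
    x ^ (n - k) / (Nat.factorial (n - k)) ≤ x ^ n / (Nat.factorial n) * ((n:ℝ) / x) ^ k := by
  have hf1 : (0:ℝ) < Nat.factorial (n - k) := by exact_mod_cast Nat.factorial_pos _
  have h1 : (Nat.factorial n : ℝ) ≤ Nat.factorial (n - k) * (n:ℝ) ^ (n - (n - k)) :=
    fact_le' (Nat.sub_le n k)
  have h2 : n - (n - k) = k := by omega
  rw [h2] at h1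
  have hxk : (0:ℝ) < x ^ k := pow_pos hx k
  rw [div_pow, div_mul_div_comm, div_le_div_iff₀ hf1 (by positivity)]
  calc x ^ (n - k) * ((Nat.factorial n : ℝ) * x ^ k)
      ≤ x ^ (n - k) * ((Nat.factorial (n - k) * (n:ℝ) ^ k) * x ^ k) := by
        apply mul_le_mul_of_nonneg_left _ (pow_nonneg hx.le _)
        exact mul_le_mul_of_nonneg_right h1 hxk.le
    _ = x ^ n * (n:ℝ) ^ k * (Nat.factorial (n - k)) := by
        rw [← pow_sub_mul_pow x hk]
        ring

lemma dev_sum (k : ℕ) (x θ : ℝ) :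
    ∑ j ∈ Finset.range (k+1), ((j:ℝ) - θ) ^ 2 * (x ^ j / (Nat.factorial j))
      = cc k x - 2 * θ * bb k x + θ ^ 2 * aa k x := by
  rw [bb_eq, cc_eq, aa, Finset.mul_sum, Finset.mul_sum, ← Finset.sum_sub_distrib,
    ← Finset.sum_add_distrib]
  apply Finset.sum_congr rfl
  intro j _
  have hj : (Nat.factorial j : ℝ) ≠ 0 := by exact_mod_cast (Nat.factorial_pos j).ne'
  field_simp
  ring

lemma var_le (k : ℕ) (x θ : ℝ) :
    aa k x * cc k x - bb k x ^ 2
      ≤ aa k x * ∑ j ∈ Finset.range (k+1), ((j:ℝ) - θ) ^ 2 * (x ^ j / (Nat.factorial j)) := by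
  rw [dev_sum]
  nlinarith [sq_nonneg (bb k x - θ * aa k x)]

lemma dev_identity (n : ℕ) (x : ℝ) :
    ∑ j ∈ Finset.range (n+1), ((j:ℝ) - x) ^ 2 * (x ^ j / (Nat.factorial j))
      = x * aa n x + x ^ n / (Nat.factorial n) * (x * (x - 1 - n)) := by
  induction n with
  | zero => simp [aa]; ring
  | succ n ih =>
      rw [Finset.sum_range_succ, ih]
      have haa : aa (n+1) x = aa n x + x ^ (n+1) / (Nat.factorial (n+1)) := by
        rw [aa, aa, Finset.sum_range_succ]
      rw [haa]
      have hfn : (Nat.factorial n : ℝ) ≠ 0 := by exact_mod_cast (Nat.factorial_pos n).ne'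
      have hfs : (Nat.factorial (n+1) : ℝ) = (n+1) * Nat.factorial n := by
        exact_mod_cast Nat.factorial_succ n
      rw [hfs]
      have hn1 : ((n:ℝ) + 1) ≠ 0 := by positivity
      field_simp
      push_cast
      ring

lemma dev_sum_top {x ρ : ℝ} (hx : 0 < x) (n : ℕ) (hρ0 : 0 ≤ ρ) (hρ1 : ρ < 1)
    (hρ : (n:ℝ) / x ≤ ρ) :
    ∑ j ∈ Finset.range (n+1), ((j:ℝ) - n) ^ 2 * (x ^ j / (Nat.factorial j))
      ≤ (∑' k : ℕ, (k:ℝ) ^ 2 * ρ ^ k) * aa n x := by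
  have hsummable : Summable (fun k : ℕ => (k:ℝ) ^ 2 * ρ ^ k) :=
    summable_pow_mul_geometric_of_norm_lt_one 2 (by rwa [Real.norm_eq_abs, abs_of_nonneg hρ0])
  have hrefl := Finset.sum_range_reflect
    (fun j => ((j:ℝ) - n) ^ 2 * (x ^ j / (Nat.factorial j))) (n+1)
  rw [← hrefl]
  have hb : ∀ k ∈ Finset.range (n+1),
      ((↑(n + 1 - 1 - k) : ℝ) - n) ^ 2 * (x ^ (n + 1 - 1 - k) / (Nat.factorial (n + 1 - 1 - k)))
        ≤ (k:ℝ) ^ 2 * ρ ^ k * (x ^ n / (Nat.factorial n)) := by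
    intro k hk
    have hkn : k ≤ n := Nat.lt_succ_iff.1 (Finset.mem_range.1 hk)
    have h1 : n + 1 - 1 - k = n - k := by omega
    rw [h1]
    have hcast : ((n - k : ℕ) : ℝ) = (n:ℝ) - k := by
      rw [Nat.cast_sub hkn]
    rw [hcast]
    have hsq : ((n:ℝ) - k - n) ^ 2 = (k:ℝ) ^ 2 := by ring
    rw [hsq]
    have h2 : x ^ (n - k) / (Nat.factorial (n - k))
        ≤ x ^ n / (Nat.factorial n) * ((n:ℝ)/x) ^ k := geom_term hx hkn
    have h3 : ((n:ℝ)/x) ^ k ≤ ρ ^ k := pow_le_pow_left₀ (by positivity) hρ k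
    calc (k:ℝ) ^ 2 * (x ^ (n-k) / (Nat.factorial (n-k)))
        ≤ (k:ℝ) ^ 2 * (x ^ n / (Nat.factorial n) * ((n:ℝ)/x) ^ k) := by
          apply mul_le_mul_of_nonneg_left h2 (by positivity)
      _ ≤ (k:ℝ) ^ 2 * (x ^ n / (Nat.factorial n) * ρ ^ k) := by
          apply mul_le_mul_of_nonneg_left _ (by positivity)
          exact mul_le_mul_of_nonneg_left h3 (term_nonneg hx.le n)
      _ = (k:ℝ) ^ 2 * ρ ^ k * (x ^ n / (Nat.factorial n)) := by ring
  calc ∑ k ∈ Finset.range (n+1),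
        ((↑(n + 1 - 1 - k) : ℝ) - n) ^ 2 * (x ^ (n + 1 - 1 - k) / (Nat.factorial (n + 1 - 1 - k)))
      ≤ ∑ k ∈ Finset.range (n+1), (k:ℝ) ^ 2 * ρ ^ k * (x ^ n / (Nat.factorial n)) :=
        Finset.sum_le_sum hb
    _ = (∑ k ∈ Finset.range (n+1), (k:ℝ) ^ 2 * ρ ^ k) * (x ^ n / (Nat.factorial n)) := by
        rw [← Finset.sum_mul]
    _ ≤ (∑' k : ℕ, (k:ℝ) ^ 2 * ρ ^ k) * aa n x := by
        apply mul_le_mul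
        · exact Summable.sum_le_tsum _ (fun k _ => by positivity) hsummable
        · exact term_le_aa hx.le le_rfl
        · exact term_nonneg hx.le n
        · exact tsum_nonneg (fun k => by positivity)

lemma ratio_le {x : ℝ} (hx : 0 < x) {m K n : ℕ} (hmK : m ≤ K) (hKn : K ≤ n)
    (hKx : (K:ℝ) ≤ x) {ρ : ℝ} (hρ : (K:ℝ)/x ≤ ρ) :
    aa m x ≤ ((m:ℝ) + 1) * ρ ^ (K - m) * aa n x := by
  have hmx : (m:ℝ) ≤ x := le_trans (by exact_mod_cast hmK) hKx
  have h1 : aa m x ≤ ((m:ℝ)+1) * (x ^ m / (Nat.factorial m)) := by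
    rw [aa]
    calc ∑ j ∈ Finset.range (m+1), x ^ j / (Nat.factorial j)
        ≤ ∑ _j ∈ Finset.range (m+1), x ^ m / (Nat.factorial m) := by
          apply Finset.sum_le_sum
          intro j hj
          exact term_le_term hx.le (Nat.lt_succ_iff.1 (Finset.mem_range.1 hj)) hmx
      _ = ((m:ℝ)+1) * (x ^ m / (Nat.factorial m)) := by
          rw [Finset.sum_const, Finset.card_range, nsmul_eq_mul]
          push_cast; ring
  have h2 : x ^ m / (Nat.factorial m) ≤ x ^ K / (Nat.factorial K) * ((K:ℝ)/x) ^ (K - m) := by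
    have h := geom_term hx (show K - m ≤ K from Nat.sub_le K m)
    rwa [show K - (K - m) = m from by omega] at h
  have h3 : ((K:ℝ)/x) ^ (K-m) ≤ ρ ^ (K-m) := pow_le_pow_left₀ (by positivity) hρ _
  have h4 : x ^ K / (Nat.factorial K) ≤ aa n x := term_le_aa hx.le hKn
  have hρ0 : 0 ≤ ρ := le_trans (by positivity) hρ
  calc aa m x ≤ ((m:ℝ)+1) * (x ^ m / (Nat.factorial m)) := h1
    _ ≤ ((m:ℝ)+1) * (x ^ K / (Nat.factorial K) * ρ ^ (K-m)) := by
        apply mul_le_mul_of_nonneg_left _ (by positivity)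
        calc x ^ m / (Nat.factorial m) ≤ x ^ K / (Nat.factorial K) * ((K:ℝ)/x) ^ (K-m) := h2
          _ ≤ x ^ K / (Nat.factorial K) * ρ ^ (K-m) :=
              mul_le_mul_of_nonneg_left h3 (term_nonneg hx.le K)
    _ ≤ ((m:ℝ)+1) * ρ ^ (K-m) * aa n x := by
        rw [show ((m:ℝ)+1) * (x ^ K / (Nat.factorial K) * ρ ^ (K-m))
          = ((m:ℝ)+1) * ρ ^ (K-m) * (x ^ K / (Nat.factorial K)) from by ring]
        apply mul_le_mul_of_nonneg_left h4 (by positivity)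

lemma key_step (A Am cn cm bn bm N T R1 R2 R12 R3 : ℝ)
    (hA : 1 ≤ A) (hAm : 0 ≤ Am) (hcn : 0 ≤ cn) (hcm : 0 ≤ cm)
    (hbn2 : bn ^ 2 ≤ A * cn) (hbm2 : bm ^ 2 ≤ Am * cm)
    (hN : 0 < N) (hT : 0 < T)
    (e3 : R3 = A + Am) (e1 : R1 = R3 * cn - bn ^ 2) (e2 : R2 = R3 * cm - bm ^ 2)
    (e12 : R12 = bn * bm) :
    0 ≤ (R1 ^ 2 + R2 ^ 2 - 2 * R12 ^ 2) /
        (N * T * R3 ^ 2 * Real.sqrt ((R1 + R2) ^ 2 - 4 * R12 ^ 2)) ∧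
    (R1 ^ 2 + R2 ^ 2 - 2 * R12 ^ 2) /
        (N * T * R3 ^ 2 * Real.sqrt ((R1 + R2) ^ 2 - 4 * R12 ^ 2))
      ≤ (R1 + R2) / (N * T * A ^ 2) := by
  have hA0 : (0:ℝ) < A := lt_of_lt_of_le one_pos hA
  have hR3A : A ≤ R3 := by rw [e3]; linarith
  have hR3 : (0:ℝ) < R3 := lt_of_lt_of_le hA0 hR3A
  have hAmcn : 0 ≤ Am * cn := mul_nonneg hAm hcn
  have hAcm : 0 ≤ A * cm := mul_nonneg hA0.le hcm
  have k1 : Am * cn ≤ R1 := by rw [e1, e3]; nlinarith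
  have k2 : A * cm ≤ R2 := by rw [e2, e3]; nlinarith
  have hr1 : 0 ≤ R1 := le_trans hAmcn k1
  have hr2 : 0 ≤ R2 := le_trans hAcm k2
  have h12 : R12 ^ 2 ≤ R1 * R2 := by
    have p1 : (Am * cn) * (A * cm) ≤ R1 * R2 := mul_le_mul k1 k2 hAcm hr1
    have p2 : bn ^ 2 * bm ^ 2 ≤ (A * cn) * (Am * cm) :=
      mul_le_mul hbn2 hbm2 (sq_nonneg _) (mul_nonneg hA0.le hcn)
    rw [e12]
    nlinarith
  obtain ⟨S, hSdef⟩ : ∃ S : ℝ, (R1 + R2) ^ 2 - 4 * R12 ^ 2 = S := ⟨_, rfl⟩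
  rw [hSdef]
  have hS0 : 0 ≤ S := by rw [← hSdef]; nlinarith [sq_nonneg (R1 - R2)]
  have hnumle : R1 ^ 2 + R2 ^ 2 - 2 * R12 ^ 2 ≤ S := by rw [← hSdef]; nlinarith
  have hnum0 : 0 ≤ R1 ^ 2 + R2 ^ 2 - 2 * R12 ^ 2 := by nlinarith [sq_nonneg (R1 - R2)]
  have hRHS0 : 0 ≤ (R1 + R2) / (N * T * A ^ 2) :=
    div_nonneg (by linarith) (by positivity)
  constructor
  · exact div_nonneg hnum0 (by positivity)
  by_cases hS : S = 0
  · rw [hS, Real.sqrt_zero, mul_zero, div_zero]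
    exact hRHS0
  · have hSpos : 0 < S := lt_of_le_of_ne hS0 (Ne.symm hS)
    have hsq : 0 < Real.sqrt S := Real.sqrt_pos.2 hSpos
    have hden : 0 < N * T * R3 ^ 2 * Real.sqrt S := by positivity
    have hss : Real.sqrt S * Real.sqrt S = S := Real.mul_self_sqrt hS0
    have step1 : (R1 ^ 2 + R2 ^ 2 - 2 * R12 ^ 2) / (N * T * R3 ^ 2 * Real.sqrt S)
        ≤ S / (N * T * R3 ^ 2 * Real.sqrt S) := by
      gcongr
    have step2 : S / (N * T * R3 ^ 2 * Real.sqrt S) = Real.sqrt S / (N * T * R3 ^ 2) := by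
      rw [div_eq_div_iff hden.ne' (by positivity : (N * T * R3 ^ 2 : ℝ) ≠ 0)]
      rw [show Real.sqrt S * (N * T * R3 ^ 2 * Real.sqrt S)
        = Real.sqrt S * Real.sqrt S * (N * T * R3 ^ 2) from by ring, hss]
    have step3 : Real.sqrt S ≤ R1 + R2 := by
      have h1 : S ≤ (R1 + R2) ^ 2 := by rw [← hSdef]; linarith [sq_nonneg R12]
      calc Real.sqrt S ≤ Real.sqrt ((R1 + R2) ^ 2) := Real.sqrt_le_sqrt h1
        _ = |R1 + R2| := Real.sqrt_sq_eq_abs _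
        _ = R1 + R2 := abs_of_nonneg (by linarith)
    have step4 : Real.sqrt S / (N * T * R3 ^ 2) ≤ (R1 + R2) / (N * T * R3 ^ 2) :=
      (div_le_div_iff_of_pos_right (by positivity)).mpr step3
    have step5 : (R1 + R2) / (N * T * R3 ^ 2) ≤ (R1 + R2) / (N * T * A ^ 2) := by
      have hAR : A ^ 2 ≤ R3 ^ 2 := pow_le_pow_left₀ hA0.le hR3A 2
      have h1 : N * T * A ^ 2 ≤ N * T * R3 ^ 2 :=
        mul_le_mul_of_nonneg_left hAR (by positivity)
      exact div_le_div_of_nonneg_left (by linarith) (by positivity) h1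
    calc (R1 ^ 2 + R2 ^ 2 - 2 * R12 ^ 2) / (N * T * R3 ^ 2 * Real.sqrt S)
        ≤ S / (N * T * R3 ^ 2 * Real.sqrt S) := step1
      _ = Real.sqrt S / (N * T * R3 ^ 2) := step2
      _ ≤ (R1 + R2) / (N * T * R3 ^ 2) := step4
      _ ≤ (R1 + R2) / (N * T * A ^ 2) := step5

/-- For `α ∈ (0,1)`, `t > α` with `t ≠ 1`, and `m(n) = ⌊α n⌋`, the rescaled first intensity,
evaluated at `x = n t`, converges to `0` as `n → ∞`. -/
theorem weyl_pointwise_scaled_above (α t : ℝ) (hα0 : 0 < α) (hα1 : α < 1)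
    (htα : α < t) (ht1 : t ≠ 1) :
    Tendsto
      (fun n : ℕ =>
        ((r1 n ⌊α * n⌋₊ (n * t)) ^ 2 + (r2 n ⌊α * n⌋₊ (n * t)) ^ 2
            - 2 * (r12 n ⌊α * n⌋₊ (n * t)) ^ 2) /
          ((n : ℝ) ^ ((3 : ℝ) / 2) * t * (r3 n ⌊α * n⌋₊ (n * t)) ^ 2 *
            Real.sqrt ((r1 n ⌊α * n⌋₊ (n * t) + r2 n ⌊α * n⌋₊ (n * t)) ^ 2
              - 4 * (r12 n ⌊α * n⌋₊ (n * t)) ^ 2)))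
      atTop (nhds 0) := by
  have ht0 : (0:ℝ) < t := lt_trans hα0 htα
  have hmin : α < min t 1 := lt_min htα hα1
  set s : ℝ := (α + min t 1) / 2 with hs_def
  have hsα : α < s := by rw [hs_def]; linarith
  have hs_lt : s < min t 1 := by rw [hs_def]; linarith
  have hst : s < t := lt_of_lt_of_le hs_lt (min_le_left t 1)
  have hs1 : s < 1 := lt_of_lt_of_le hs_lt (min_le_right t 1)
  have hs0 : (0:ℝ) < s := lt_trans hα0 hsα
  set ρ : ℝ := s / t with hρ_def
  have hρ0 : (0:ℝ) < ρ := div_pos hs0 ht0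
  have hρ1 : ρ < 1 := (div_lt_one ht0).2 hst
  set γ : ℝ := s - α with hγ_def
  have hγ0 : (0:ℝ) < γ := by rw [hγ_def]; linarith
  set q : ℝ := ρ ^ γ with hq_def
  have hq0 : (0:ℝ) < q := Real.rpow_pos_of_pos hρ0 γ
  have hq1 : q < 1 := Real.rpow_lt_one hρ0.le hρ1 hγ0
  -- variance bound, uniform in the two regimes
  obtain ⟨C, hC0, hCev⟩ : ∃ C : ℝ, 0 ≤ C ∧ ∀ᶠ (n:ℕ) in atTop,
      aa n ((n:ℝ)*t) * cc n ((n:ℝ)*t) - bb n ((n:ℝ)*t) ^ 2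
        ≤ C * n * aa n ((n:ℝ)*t) ^ 2 := by
    rcases le_or_gt t 1 with ht | ht
    · refine ⟨t, ht0.le, ?_⟩
      filter_upwards [eventually_ge_atTop 1] with n hn
      have hn1 : (1:ℝ) ≤ (n:ℝ) := by exact_mod_cast hn
      have hx0 : (0:ℝ) ≤ (n:ℝ)*t := by positivity
      have h1 := var_le n ((n:ℝ)*t) ((n:ℝ)*t)
      rw [dev_identity] at h1
      have hterm : (0:ℝ) ≤ ((n:ℝ)*t) ^ n / (Nat.factorial n) := term_nonneg hx0 n
      have hneg : ((n:ℝ)*t) * (((n:ℝ)*t) - 1 - n) ≤ 0 := by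
        apply mul_nonpos_of_nonneg_of_nonpos hx0
        nlinarith
      have hprod : ((n:ℝ)*t) ^ n / (Nat.factorial n) * (((n:ℝ)*t) * (((n:ℝ)*t) - 1 - n)) ≤ 0 :=
        mul_nonpos_of_nonneg_of_nonpos hterm hneg
      have h2 : aa n ((n:ℝ)*t) * cc n ((n:ℝ)*t) - bb n ((n:ℝ)*t) ^ 2
          ≤ aa n ((n:ℝ)*t) * (((n:ℝ)*t) * aa n ((n:ℝ)*t)) := by
        refine le_trans h1 ?_
        apply mul_le_mul_of_nonneg_left _ (aa_nonneg hx0 n)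
        linarith
      calc aa n ((n:ℝ)*t) * cc n ((n:ℝ)*t) - bb n ((n:ℝ)*t) ^ 2
          ≤ aa n ((n:ℝ)*t) * (((n:ℝ)*t) * aa n ((n:ℝ)*t)) := h2
        _ = t * n * aa n ((n:ℝ)*t) ^ 2 := by ring
    · refine ⟨∑' k : ℕ, (k:ℝ)^2 * (1/t)^k, tsum_nonneg (fun k => by positivity), ?_⟩
      filter_upwards [eventually_ge_atTop 1] with n hn
      have hn1 : (1:ℝ) ≤ (n:ℝ) := by exact_mod_cast hn
      have hx : (0:ℝ) < (n:ℝ)*t := mul_pos (lt_of_lt_of_le one_pos hn1) ht0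
      have h1 := var_le n ((n:ℝ)*t) ((n:ℝ))
      have hρt : (n:ℝ)/((n:ℝ)*t) ≤ 1/t := by
        have hne : (n:ℝ) ≠ 0 := by linarith
        rw [show (n:ℝ)/((n:ℝ)*t) = 1/t from by field_simp]
      have h2 := dev_sum_top hx n (by positivity) ((div_lt_one ht0).2 ht) hρt
      have h3 : aa n ((n:ℝ)*t) * cc n ((n:ℝ)*t) - bb n ((n:ℝ)*t) ^ 2
          ≤ aa n ((n:ℝ)*t) * ((∑' k : ℕ, (k:ℝ)^2 * (1/t)^k) * aa n ((n:ℝ)*t)) :=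
        le_trans h1 (mul_le_mul_of_nonneg_left h2 (aa_nonneg hx.le n))
      have hCt0 : (0:ℝ) ≤ ∑' k : ℕ, (k:ℝ)^2 * (1/t)^k := tsum_nonneg (fun k => by positivity)
      have h4 : (0:ℝ) ≤ ((n:ℝ) - 1) * ((∑' k : ℕ, (k:ℝ)^2 * (1/t)^k) * aa n ((n:ℝ)*t) ^ 2) := by
        apply mul_nonneg (by linarith)
        exact mul_nonneg hCt0 (sq_nonneg _)
      nlinarith [h3, h4]
  -- the dominating sequence
  have hgt : Tendsto (fun n : ℕ =>
      (C/t) * ((n:ℝ) ^ ((1:ℝ)/2))⁻¹ + (6/(t*ρ)) * ((n:ℝ)^3 * q^n)) atTop (nhds 0) := by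
    have T1 : Tendsto (fun n:ℕ => ((n:ℝ) ^ ((1:ℝ)/2))⁻¹) atTop (nhds 0) := by
      apply Filter.Tendsto.inv_tendsto_atTop
      exact (tendsto_rpow_atTop (by norm_num)).comp tendsto_natCast_atTop_atTop
    have T2 : Tendsto (fun n:ℕ => (n:ℝ)^3 * q^n) atTop (nhds 0) :=
      tendsto_pow_const_mul_const_pow_of_lt_one 3 hq0.le hq1
    have := (T1.const_mul (C/t)).add (T2.const_mul (6/(t*ρ)))
    simpa using this
  -- the main eventual bounds
  have hmain : ∀ᶠ (n:ℕ) in atTop,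
      0 ≤ ((r1 n ⌊α * n⌋₊ (n * t)) ^ 2 + (r2 n ⌊α * n⌋₊ (n * t)) ^ 2
            - 2 * (r12 n ⌊α * n⌋₊ (n * t)) ^ 2) /
          ((n : ℝ) ^ ((3 : ℝ) / 2) * t * (r3 n ⌊α * n⌋₊ (n * t)) ^ 2 *
            Real.sqrt ((r1 n ⌊α * n⌋₊ (n * t) + r2 n ⌊α * n⌋₊ (n * t)) ^ 2
              - 4 * (r12 n ⌊α * n⌋₊ (n * t)) ^ 2)) ∧
      ((r1 n ⌊α * n⌋₊ (n * t)) ^ 2 + (r2 n ⌊α * n⌋₊ (n * t)) ^ 2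
            - 2 * (r12 n ⌊α * n⌋₊ (n * t)) ^ 2) /
          ((n : ℝ) ^ ((3 : ℝ) / 2) * t * (r3 n ⌊α * n⌋₊ (n * t)) ^ 2 *
            Real.sqrt ((r1 n ⌊α * n⌋₊ (n * t) + r2 n ⌊α * n⌋₊ (n * t)) ^ 2
              - 4 * (r12 n ⌊α * n⌋₊ (n * t)) ^ 2))
        ≤ (C/t) * ((n:ℝ) ^ ((1:ℝ)/2))⁻¹ + (6/(t*ρ)) * ((n:ℝ)^3 * q^n) := by
    filter_upwards [hCev, eventually_ge_atTop 1,
      tendsto_natCast_atTop_atTop.eventually_ge_atTop (1/γ)] with n hCn hn1 hnγ'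
    set x : ℝ := (n:ℝ) * t with hx_def
    set m : ℕ := ⌊α * (n:ℝ)⌋₊ with hm_def
    set K : ℕ := ⌊s * (n:ℝ)⌋₊ with hK_def
    have hn1' : (1:ℝ) ≤ (n:ℝ) := by exact_mod_cast hn1
    have hn0 : (0:ℝ) < (n:ℝ) := by linarith
    have hx0 : (0:ℝ) < x := mul_pos hn0 ht0
    have hγn : (1:ℝ) ≤ γ * n := by
      have : γ * (1/γ) ≤ γ * n := mul_le_mul_of_nonneg_left hnγ' hγ0.le
      rwa [mul_one_div, div_self hγ0.ne'] at this
    have hmα : (m:ℝ) ≤ α * n := Nat.floor_le (by positivity)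
    have hK_le : (K:ℝ) ≤ s * n := Nat.floor_le (by positivity)
    have hK_gt : s * n - 1 < (K:ℝ) := by
      have := Nat.lt_floor_add_one (s * (n:ℝ))
      linarith
    have hγmul : γ * (n:ℝ) = s * n - α * n := by rw [hγ_def]; ring
    have hmKr : (m:ℝ) < (K:ℝ) := by
      linarith only [hmα, hK_gt, hγn, hγmul]
    have hmK : m ≤ K := le_of_lt (by exact_mod_cast hmKr)
    have hKn : K ≤ n := by
      have hsn : s * (n:ℝ) ≤ 1 * n := mul_le_mul_of_nonneg_right hs1.le hn0.le
      have h : (K:ℝ) ≤ (n:ℝ) := le_trans hK_le (by linarith only [hsn])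
      exact_mod_cast h
    have hmn : m ≤ n := le_trans hmK hKn
    have hstn : s * (n:ℝ) ≤ t * n := mul_le_mul_of_nonneg_right hst.le hn0.le
    have hKx : (K:ℝ) ≤ x := le_trans hK_le (by rw [hx_def]; linarith only [hstn])
    have hKρ : (K:ℝ)/x ≤ ρ := by
      rw [hρ_def, hx_def, div_le_div_iff₀ (by positivity) ht0]
      have := mul_le_mul_of_nonneg_right hK_le ht0.le
      linarith only [this]
    have hb2n : bb n x ^ 2 ≤ aa n x * cc n x := cauchy hx0.le n
    have hb2m : bb m x ^ 2 ≤ aa m x * cc m x := cauchy hx0.le m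
    have hN : (0:ℝ) < (n:ℝ) ^ ((3:ℝ)/2) := Real.rpow_pos_of_pos hn0 _
    obtain ⟨hf0, hf1⟩ := key_step (aa n x) (aa m x) (cc n x) (cc m x) (bb n x) (bb m x)
      ((n:ℝ) ^ ((3:ℝ)/2)) t (r1 n m x) (r2 n m x) (r12 n m x) (r3 n m x)
      (one_le_aa hx0.le n) (aa_nonneg hx0.le m) (cc_nonneg hx0.le n) (cc_nonneg hx0.le m)
      hb2n hb2m hN ht0 rfl rfl rfl rfl
    refine ⟨hf0, le_trans hf1 ?_⟩
    -- bound (r1 + r2)/(N t A²)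
    have hAm_le : aa m x ≤ ((m:ℝ)+1) * ρ^(K-m) * aa n x := ratio_le hx0 hmK hKn hKx hKρ
    have hcn_le : cc n x ≤ (n:ℝ)^2 * aa n x := cc_le hx0.le n
    have hcm_le : cc m x ≤ (m:ℝ)^2 * aa m x := cc_le hx0.le m
    have hcmn : cc m x ≤ cc n x := cc_mono hx0.le hmn
    have hAn0 : (0:ℝ) < aa n x := lt_of_lt_of_le one_pos (one_le_aa hx0.le n)
    have hAmge : (0:ℝ) ≤ aa m x := aa_nonneg hx0.le m
    have hsum : r1 n m x + r2 n m x
        ≤ C * n * aa n x ^ 2 + 3 * (n:ℝ)^2 * (aa m x * aa n x) := by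
      have e : r1 n m x + r2 n m x = (aa n x * cc n x - bb n x ^ 2)
          + (aa m x * cc m x - bb m x ^ 2) + aa m x * cc n x + aa n x * cc m x := by
        simp only [r1, r2, r3]; ring
      rw [e]
      have p2 : aa m x * cc m x - bb m x ^ 2 ≤ aa m x * cc n x := by
        have h := mul_le_mul_of_nonneg_left hcmn hAmge
        linarith only [h, sq_nonneg (bb m x)]
      have p3 : aa m x * cc n x ≤ (n:ℝ)^2 * (aa m x * aa n x) := by
        calc aa m x * cc n x ≤ aa m x * ((n:ℝ)^2 * aa n x) :=
              mul_le_mul_of_nonneg_left hcn_le hAmge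
          _ = (n:ℝ)^2 * (aa m x * aa n x) := by ring
      have p4 : aa n x * cc m x ≤ (n:ℝ)^2 * (aa m x * aa n x) := by
        have hm_le_n : (m:ℝ)^2 ≤ (n:ℝ)^2 := by
          have h1 : (m:ℝ) ≤ (n:ℝ) := by exact_mod_cast hmn
          exact pow_le_pow_left₀ (Nat.cast_nonneg m) h1 2
        calc aa n x * cc m x ≤ aa n x * ((m:ℝ)^2 * aa m x) :=
              mul_le_mul_of_nonneg_left hcm_le hAn0.le
          _ ≤ aa n x * ((n:ℝ)^2 * aa m x) := by
              apply mul_le_mul_of_nonneg_left _ hAn0.le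
              exact mul_le_mul_of_nonneg_right hm_le_n hAmge
          _ = (n:ℝ)^2 * (aa m x * aa n x) := by ring
      linarith only [hCn, p2, p3, p4]
    have hAm2 : aa m x * aa n x ≤ ((m:ℝ)+1) * ρ^(K-m) * aa n x ^ 2 := by
      calc aa m x * aa n x ≤ (((m:ℝ)+1) * ρ^(K-m) * aa n x) * aa n x :=
            mul_le_mul_of_nonneg_right hAm_le hAn0.le
        _ = ((m:ℝ)+1) * ρ^(K-m) * aa n x ^ 2 := by ring
    have hsum2 : r1 n m x + r2 n m x
        ≤ (C * n + 3*(n:ℝ)^2*(((m:ℝ)+1) * ρ^(K-m))) * aa n x ^ 2 := by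
      have h := mul_le_mul_of_nonneg_left hAm2 (by positivity : (0:ℝ) ≤ 3*(n:ℝ)^2)
      have e2 : (C * n + 3*(n:ℝ)^2*(((m:ℝ)+1) * ρ^(K-m))) * aa n x ^ 2
          = C * n * aa n x ^ 2 + 3*(n:ℝ)^2 * (((m:ℝ)+1) * ρ^(K-m) * aa n x ^ 2) := by ring
      rw [e2]
      linarith only [hsum, h]
    have hA2 : (0:ℝ) < aa n x ^ 2 := pow_pos hAn0 2
    have hdiv : (r1 n m x + r2 n m x)/((n:ℝ)^((3:ℝ)/2) * t * aa n x ^ 2)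
        ≤ (C * n + 3*(n:ℝ)^2*(((m:ℝ)+1) * ρ^(K-m))) / ((n:ℝ)^((3:ℝ)/2) * t) := by
      rw [show (C * n + 3*(n:ℝ)^2*(((m:ℝ)+1) * ρ^(K-m))) / ((n:ℝ)^((3:ℝ)/2) * t)
        = (C * n + 3*(n:ℝ)^2*(((m:ℝ)+1) * ρ^(K-m))) * aa n x ^ 2
            / ((n:ℝ)^((3:ℝ)/2) * t * aa n x ^ 2) from by
          rw [mul_div_mul_right _ _ hA2.ne']]
      exact (div_le_div_iff_of_pos_right (by positivity)).mpr hsum2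
    refine le_trans hdiv ?_
    rw [add_div]
    apply add_le_add
    · -- C n/(n^{3/2} t) = (C/t) (n^{1/2})⁻¹
      have e : (n:ℝ)^((3:ℝ)/2) = (n:ℝ)^((1:ℝ)/2) * n := by
        rw [show (3:ℝ)/2 = (1:ℝ)/2 + 1 from by norm_num, Real.rpow_add hn0, Real.rpow_one]
      have h12 : (0:ℝ) < (n:ℝ)^((1:ℝ)/2) := Real.rpow_pos_of_pos hn0 _
      apply le_of_eq
      rw [e]
      field_simp
    · -- exponential piece
      have hd1 : (1:ℝ) ≤ (n:ℝ)^((3:ℝ)/2) := by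
        rw [show (1:ℝ) = (1:ℝ)^((3:ℝ)/2) from (Real.one_rpow _).symm]
        exact Real.rpow_le_rpow (by norm_num) hn1' (by norm_num)
      have hnum0 : (0:ℝ) ≤ 3*(n:ℝ)^2*(((m:ℝ)+1) * ρ^(K-m)) := by positivity
      have step_a : 3*(n:ℝ)^2*(((m:ℝ)+1) * ρ^(K-m)) / ((n:ℝ)^((3:ℝ)/2) * t)
          ≤ 3*(n:ℝ)^2*(((m:ℝ)+1) * ρ^(K-m)) / t := by
        apply div_le_div_of_nonneg_left hnum0 ht0
        have := mul_le_mul_of_nonneg_right hd1 ht0.le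
        linarith only [this]
      refine le_trans step_a ?_
      have hexp : (γ*(n:ℝ) - 1 : ℝ) ≤ ((K - m : ℕ) : ℝ) := by
        rw [Nat.cast_sub hmK]
        linarith only [hK_gt, hmα, hγmul]
      have hρpow : ρ^(K-m) ≤ q^n / ρ := by
        have h1 : (ρ:ℝ)^(K-m) = ρ^(((K-m : ℕ)):ℝ) := (Real.rpow_natCast ρ (K-m)).symm
        have h2 : ρ^((((K-m) : ℕ)):ℝ) ≤ ρ^(γ*(n:ℝ)-1) :=
          Real.rpow_le_rpow_of_exponent_ge hρ0 hρ1.le hexp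
        have h3 : ρ^(γ*(n:ℝ)-1) = q^n / ρ := by
          rw [← Real.rpow_natCast q n, hq_def, ← Real.rpow_mul hρ0.le]
          rw [Real.rpow_sub hρ0, Real.rpow_one]
        rw [h1]
        rw [h3] at h2
        exact h2
      have hm2n : ((m:ℝ)+1) ≤ 2*(n:ℝ) := by
        have h1 : α * (n:ℝ) ≤ 1 * n := mul_le_mul_of_nonneg_right hα1.le hn0.le
        linarith only [hmα, h1, hn1']
      have hfin : 3*(n:ℝ)^2*(((m:ℝ)+1) * ρ^(K-m)) ≤ 3*(n:ℝ)^2*((2*(n:ℝ)) * (q^n/ρ)) := by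
        apply mul_le_mul_of_nonneg_left _ (by positivity)
        apply mul_le_mul hm2n hρpow (by positivity) (by positivity)
      calc 3*(n:ℝ)^2*(((m:ℝ)+1) * ρ^(K-m)) / t
          ≤ 3*(n:ℝ)^2*((2*(n:ℝ)) * (q^n/ρ)) / t := by
            exact (div_le_div_iff_of_pos_right ht0).mpr hfin
        _ = (6/(t*ρ)) * ((n:ℝ)^3 * q^n) := by
            field_simp
            ring
  exact squeeze_zero' (hmain.mono fun n h => h.1) (hmain.mono fun n h => h.2) hgt
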